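/- Let G be a finite group and H a subgroup that is a perfect code of G (i.e., H admits an inverse-closed right transversal in G). Let x ∈ G \ H with HxH = Hx⁻¹H and |H|/|H ∩ H^x| odd. Then for every integer b with 0 ≤ b ≤ |H|, there exist b pairwise disjoint right transversals of H in HxH whose union is inverse-closed. -/

import Mathlib

open scoped Pointwise

/-- T is a right transversal of H in A: T ⊆ A and T meets the right coset of
each element of A exactly once. -/
def IsRightTransversalOn {G : Type*} [Group G] (H : Subgroup G) (T A : Set G) : Prop :=
  T ⊆ A ∧ ∀ g ∈ A, ∃! t, t ∈ T ∧ t * g⁻¹ ∈ H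

/-- H is a perfect code of G: it admits an inverse-closed right transversal in G. -/
def IsPerfectCode {G : Type*} [Group G] (H : Subgroup G) : Prop :=
  ∃ T : Set G, (∀ g : G, ∃! t, t ∈ T ∧ t * g⁻¹ ∈ H) ∧ T⁻¹ = T



section Helpers

variable {α : Type*} {ι : Type*}

/-- card of a pairwise disjoint finite union -/
lemma my_ncard_biUnion [Finite α] (s : Finset ι) (f : ι → Set α)
    (h : ∀ i ∈ s, ∀ j ∈ s, i ≠ j → Disjoint (f i) (f j)) :
    (⋃ i ∈ s, f i).ncard = ∑ i ∈ s, (f i).ncard := by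
  classical
  induction s using Finset.induction_on with
  | empty => simp
  | @insert a s ha ih =>
    rw [Finset.set_biUnion_insert, Finset.sum_insert ha,
      Set.ncard_union_eq ?_ (Set.toFinite _) (Set.toFinite _),
      ih (fun i hi j hj hij => h i (Finset.mem_insert_of_mem hi) j (Finset.mem_insert_of_mem hj) hij)]
    rw [Set.disjoint_iUnion_right]
    intro i
    rw [Set.disjoint_iUnion_right]
    intro hi
    exact h a (Finset.mem_insert_self a s) i (Finset.mem_insert_of_mem hi)
      (fun hai => ha (hai ▸ hi))

lemma my_ncard_iUnion [Finite α] [Fintype ι] (f : ι → Set α)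
    (h : ∀ i j : ι, i ≠ j → Disjoint (f i) (f j)) :
    (⋃ i, f i).ncard = ∑ i, (f i).ncard := by
  classical
  have h1 : (⋃ i, f i) = ⋃ i ∈ (Finset.univ : Finset ι), f i := by simp
  rw [h1, my_ncard_biUnion _ _ (fun i _ j _ hij => h i j hij)]

/-- rank function: existence and uniqueness of the element of given rank -/
lemma rank_existsUnique [LinearOrder α] (A : Set α) (hA : A.Finite) {m : ℕ}
    (hm : m < A.ncard) :
    ∃! a, a ∈ A ∧ (A ∩ {y | y < a}).ncard = m := by
  classical
  set rk : α → ℕ := fun a => (A ∩ {y | y < a}).ncard with hrk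
  have hmono : ∀ a ∈ A, ∀ a' ∈ A, a < a' → rk a < rk a' := by
    intro a ha a' ha' hlt
    apply Set.ncard_lt_ncard ?_ (hA.inter_of_left _)
    constructor
    · exact fun y hy => ⟨hy.1, lt_trans hy.2 hlt⟩
    · intro hsub
      exact lt_irrefl a (hsub ⟨ha, hlt⟩).2
  have hinj : Set.InjOn rk A := by
    intro a ha a' ha' heq
    by_contra hne
    rcases lt_or_gt_of_ne hne with h' | h'
    · exact absurd heq (Nat.ne_of_lt (hmono a ha a' ha' h'))
    · exact absurd heq.symm (Nat.ne_of_lt (hmono a' ha' a ha h'))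
  have hlt : ∀ a ∈ A, rk a < A.ncard := by
    intro a ha
    apply Set.ncard_lt_ncard ?_ hA
    exact ⟨Set.inter_subset_left, fun hsub => lt_irrefl a (hsub ha).2⟩
  have hex : ∃ a, a ∈ A ∧ rk a = m := by
    have himg : hA.toFinset.image rk ⊆ Finset.range A.ncard := by
      intro n hn
      obtain ⟨a, ha, rfl⟩ := Finset.mem_image.mp hn
      exact Finset.mem_range.mpr (hlt a (hA.mem_toFinset.mp ha))
    have hcard : (hA.toFinset.image rk).card = hA.toFinset.card :=
      Finset.card_image_of_injOn (by rwa [Set.Finite.coe_toFinset])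
    have hcard2 : hA.toFinset.card = A.ncard := (Set.ncard_eq_toFinset_card A hA).symm
    have heqimg : hA.toFinset.image rk = Finset.range A.ncard := by
      apply Finset.eq_of_subset_of_card_le himg
      rw [hcard, hcard2, Finset.card_range]
    have : m ∈ hA.toFinset.image rk := by
      rw [heqimg]; exact Finset.mem_range.mpr hm
    obtain ⟨a, ha, hram⟩ := Finset.mem_image.mp this
    exact ⟨a, hA.mem_toFinset.mp ha, hram⟩
  obtain ⟨a, ha, hram⟩ := hex
  exact ⟨a, ⟨ha, hram⟩, fun a' ⟨ha', hram'⟩ => hinj ha' ha (hram'.trans hram.symm)⟩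

end Helpers


section Helpers2

variable {G : Type*} [Group G]

lemma inv_pair_eq (a : G) : ({a, a⁻¹} : Set G)⁻¹ = {a, a⁻¹} := by
  rw [← Set.image_inv_eq_inv, Set.image_insert_eq, Set.image_singleton, inv_inv, Set.pair_comm]

lemma inv_diff_eq (A B : Set G) (hA : A⁻¹ = A) (hB : B⁻¹ = B) : (A \ B)⁻¹ = A \ B := by
  rw [← Set.image_inv_eq_inv, Set.image_diff inv_injective, Set.image_inv_eq_inv,
    Set.image_inv_eq_inv, hA, hB]

lemma inv_insert_eq (B : Set G) (hB : B⁻¹ = B) (a : G) (hfix : a⁻¹ = a) :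
    (insert a B)⁻¹ = insert a B := by
  rw [← Set.image_inv_eq_inv, Set.image_insert_eq, Set.image_inv_eq_inv, hB, hfix]

lemma mem_of_inv_closed {A : Set G} (hA : A⁻¹ = A) {a : G} (ha : a ∈ A) : a⁻¹ ∈ A := by
  rw [← hA]; simpa using ha

lemma ncard_diff_pair {A : Set G} [Finite G] {a : G} (ha : a ∈ A) (hainv : a⁻¹ ∈ A)
    (hfix : a⁻¹ ≠ a) : (A \ {a, a⁻¹}).ncard = A.ncard - 2 := by
  rw [show ({a, a⁻¹} : Set G) = {a} ∪ {a⁻¹} from Set.insert_eq a {a⁻¹}, ← Set.diff_diff]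
  rw [Set.ncard_diff_singleton_of_mem (by simp [hainv, hfix] : a⁻¹ ∈ A \ {a})]
  rw [Set.ncard_diff_singleton_of_mem ha]
  omega

lemma two_le_of_pair {A : Set G} [Finite G] {a : G} (ha : a ∈ A) (hainv : a⁻¹ ∈ A)
    (hfix : a⁻¹ ≠ a) : 2 ≤ A.ncard := by
  have hsub : ({a, a⁻¹} : Set G) ⊆ A := by
    intro w hw; rcases hw with rfl | hw
    · exact ha
    · rw [Set.mem_singleton_iff] at hw; rw [hw]; exact hainv
  have := Set.ncard_le_ncard hsub (Set.toFinite A)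
  rwa [Set.ncard_pair (Ne.symm hfix)] at this

/-- an inverse-closed finite set of odd cardinality contains an involution-ish element -/
lemma odd_fix [Finite G] (A : Set G) (hA : A⁻¹ = A) (hodd : Odd A.ncard) :
    ∃ a ∈ A, a⁻¹ = a := by
  classical
  generalize hn : A.ncard = n at hodd
  induction n using Nat.strong_induction_on generalizing A with
  | _ n ih =>
  have hpos : 0 < n := hodd.pos
  have hne : A.Nonempty := by
    rw [Set.nonempty_iff_ne_empty]
    intro h
    rw [h, Set.ncard_empty] at hn
    omega
  obtain ⟨a, ha⟩ := hne
  by_cases hfix : a⁻¹ = a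
  · exact ⟨a, ha, hfix⟩
  · have hainv : a⁻¹ ∈ A := mem_of_inv_closed hA ha
    have hge2 : 2 ≤ n := hn ▸ two_le_of_pair ha hainv hfix
    have hsub : (A \ {a, a⁻¹}).ncard = n - 2 := by
      rw [ncard_diff_pair ha hainv hfix, hn]
    have hodd' : Odd (n - 2) := by
      rcases hodd with ⟨c, hc⟩
      exact ⟨c - 1, by omega⟩
    obtain ⟨w, hw, hwfix⟩ := ih (n - 2) (by omega) (A \ {a, a⁻¹})
      (inv_diff_eq A _ hA (inv_pair_eq a)) hsub hodd'
    exact ⟨w, hw.1, hwfix⟩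

/-- selection of an inverse-closed subset of any feasible size -/
lemma inv_select [Finite G] (m : ℕ) (A : Set G) (hA : A⁻¹ = A) (hm : m ≤ A.ncard)
    (hcond : Even m ∨ ∃ a ∈ A, a⁻¹ = a) :
    ∃ B, B ⊆ A ∧ B⁻¹ = B ∧ B.ncard = m := by
  classical
  induction m using Nat.strong_induction_on generalizing A with
  | _ m ih =>
  rcases Nat.eq_zero_or_pos m with rfl | hpos
  · exact ⟨∅, Set.empty_subset A, Set.inv_empty, Set.ncard_empty G⟩
  by_cases hev : Even m
  · -- even positive case
    by_cases hall : ∀ a ∈ A, a⁻¹ = a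
    · obtain ⟨B, hBA, hBcard⟩ := Set.exists_subset_card_eq hm
      refine ⟨B, hBA, ?_, hBcard⟩
      ext w
      simp only [Set.mem_inv]
      constructor
      · intro h
        have h2 : w⁻¹⁻¹ = w⁻¹ := hall _ (hBA h)
        rw [inv_inv] at h2
        rw [h2]; exact h
      · intro h
        have h2 : w⁻¹ = w := hall _ (hBA h)
        rw [h2]; exact h
    · push_neg at hall
      obtain ⟨a, ha, hafix⟩ := hall
      have hainv : a⁻¹ ∈ A := mem_of_inv_closed hA ha
      have hge2 : 2 ≤ A.ncard := two_le_of_pair ha hainv hafix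
      have hsub : (A \ {a, a⁻¹}).ncard = A.ncard - 2 := ncard_diff_pair ha hainv hafix
      have hm2 : m - 2 ≤ (A \ {a, a⁻¹}).ncard := by rw [hsub]; omega
      have h2m : 2 ≤ m := by
        rcases hev with ⟨c, hc⟩; omega
      have hev2 : Even (m - 2) := by
        rcases hev with ⟨c, hc⟩; exact ⟨c - 1, by omega⟩
      obtain ⟨B, hBA, hBinv, hBcard⟩ := ih (m - 2) (by omega) (A \ {a, a⁻¹})
        (inv_diff_eq A _ hA (inv_pair_eq a)) hm2 (Or.inl hev2)
      have hanB : a ∉ insert a⁻¹ B := by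
        intro h
        rcases h with h | h
        · exact hafix h.symm
        · exact (hBA h).2 (by simp)
      have hainvB : a⁻¹ ∉ B := fun h => (hBA h).2 (by simp)
      refine ⟨insert a (insert a⁻¹ B), ?_, ?_, ?_⟩
      · intro w hw
        rcases hw with rfl | hw
        · exact ha
        · rcases hw with rfl | hw
          · exact hainv
          · exact (hBA hw).1
      · rw [← Set.image_inv_eq_inv, Set.image_insert_eq, Set.image_insert_eq,
          Set.image_inv_eq_inv, hBinv, inv_inv, Set.insert_comm]
      · rw [Set.ncard_insert_of_notMem hanB (Set.toFinite _),
          Set.ncard_insert_of_notMem hainvB (Set.toFinite _), hBcard]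
        omega
  · -- odd case: must have a fixed point
    rcases hcond with hcond | hcond
    · exact absurd hcond hev
    obtain ⟨a, ha, hafix⟩ := hcond
    have hm1 : m - 1 ≤ (A \ {a}).ncard := by
      rw [Set.ncard_diff_singleton_of_mem ha]; omega
    have hev1 : Even (m - 1) := by
      rcases Nat.not_even_iff_odd.mp hev with ⟨c, hc⟩
      exact ⟨c, by omega⟩
    have hAdinv : (A \ {a})⁻¹ = A \ {a} := by
      apply inv_diff_eq A _ hA
      rw [Set.inv_singleton, hafix]
    obtain ⟨B, hBA, hBinv, hBcard⟩ := ih (m - 1) (by omega) (A \ {a}) hAdinv hm1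
      (Or.inl hev1)
    refine ⟨insert a B, ?_, inv_insert_eq B hBinv a hafix, ?_⟩
    · intro w hw
      rcases hw with rfl | hw
      · exact ha
      · exact (hBA hw).1
    · rw [Set.ncard_insert_of_notMem (fun h => (hBA h).2 rfl) (Set.toFinite _), hBcard]
      omega

end Helpers2


section Cosets

variable {G : Type*} [Group G]

/-- the right coset of `H` containing `g` -/
def rcos (H : Subgroup G) (g : G) : Set G := {d | d * g⁻¹ ∈ H}

lemma mem_rcos_self (H : Subgroup G) (g : G) : g ∈ rcos H g := by
  simp [rcos, one_mem]

lemma mem_rcos_iff (H : Subgroup G) (g d : G) : d ∈ rcos H g ↔ d * g⁻¹ ∈ H := Iff.rfl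

lemma rcos_eq_of_mem {H : Subgroup G} {g s : G} (hs : s ∈ rcos H g) : rcos H s = rcos H g := by
  rw [mem_rcos_iff] at hs
  ext d
  rw [mem_rcos_iff, mem_rcos_iff]
  constructor
  · intro h
    have h2 := H.mul_mem h hs
    have e : d * s⁻¹ * (s * g⁻¹) = d * g⁻¹ := by group
    rwa [e] at h2
  · intro h
    have h2 := H.mul_mem h (H.inv_mem hs)
    have e : d * g⁻¹ * (s * g⁻¹)⁻¹ = d * s⁻¹ := by group
    rwa [e] at h2

lemma rcos_eq_of_nonempty {H : Subgroup G} {g g' : G}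
    (h : (rcos H g ∩ rcos H g').Nonempty) : rcos H g = rcos H g' := by
  obtain ⟨w, hw1, hw2⟩ := h
  rw [← rcos_eq_of_mem hw1, rcos_eq_of_mem hw2]

lemma ncard_rcos [Fintype G] (H : Subgroup G) (g : G) :
    (rcos H g).ncard = Nat.card H := by
  have himg : rcos H g = (fun h => h * g) '' (H : Set G) := by
    ext d
    simp only [mem_rcos_iff, Set.mem_image, SetLike.mem_coe]
    constructor
    · intro h
      exact ⟨d * g⁻¹, h, by group⟩
    · rintro ⟨h, hh, rfl⟩
      simpa using hh
  rw [himg, Set.ncard_image_of_injective _ (fun u v huv => by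
    simpa using mul_right_cancel (huv : u * g = v * g))]
  rw [← Nat.card_coe_set_eq, SetLike.coe_sort_coe]

variable {H : Subgroup G} {x : G}

lemma memD_iff {g : G} :
    g ∈ (H : Set G) * {x} * (H : Set G) ↔ ∃ h1 ∈ H, ∃ h2 ∈ H, g = h1 * x * h2 := by
  simp only [Set.mem_mul, Set.mem_singleton_iff, SetLike.mem_coe]
  constructor
  · rintro ⟨u, ⟨h1, hh1, w, rfl, rfl⟩, h2, hh2, rfl⟩
    exact ⟨h1, hh1, h2, hh2, rfl⟩
  · rintro ⟨h1, hh1, h2, hh2, rfl⟩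
    exact ⟨h1 * x, ⟨h1, hh1, x, rfl, rfl⟩, h2, hh2, rfl⟩

lemma x_mem_D : x ∈ (H : Set G) * {x} * (H : Set G) :=
  memD_iff.mpr ⟨1, one_mem H, 1, one_mem H, by group⟩

lemma xinv_mem_D (heq : (H : Set G) * {x} * (H : Set G) = (H : Set G) * {x⁻¹} * (H : Set G)) :
    x⁻¹ ∈ (H : Set G) * {x} * (H : Set G) := by
  rw [heq]
  exact memD_iff.mpr ⟨1, one_mem H, 1, one_mem H, by group⟩

lemma rcos_subset_D {g : G} (hg : g ∈ (H : Set G) * {x} * (H : Set G)) :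
    rcos H g ⊆ (H : Set G) * {x} * (H : Set G) := by
  obtain ⟨h1, hh1, h2, hh2, hgE⟩ := memD_iff.mp hg
  intro d hd
  rw [mem_rcos_iff] at hd
  refine memD_iff.mpr ⟨d * g⁻¹ * h1, H.mul_mem hd hh1, h2, hh2, ?_⟩
  rw [hgE]
  group

lemma D_inv (heq : (H : Set G) * {x} * (H : Set G) = (H : Set G) * {x⁻¹} * (H : Set G)) :
    ((H : Set G) * {x} * (H : Set G))⁻¹ = (H : Set G) * {x} * (H : Set G) := by
  ext w
  rw [Set.mem_inv, memD_iff]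
  conv_rhs => rw [heq]
  rw [memD_iff]
  constructor
  · rintro ⟨h1, hh1, h2, hh2, hE⟩
    refine ⟨h2⁻¹, H.inv_mem hh2, h1⁻¹, H.inv_mem hh1, ?_⟩
    rw [show w = (w⁻¹)⁻¹ from (inv_inv w).symm, hE]
    group
  · rintro ⟨h1, hh1, h2, hh2, hE⟩
    refine ⟨h2⁻¹, H.inv_mem hh2, h1⁻¹, H.inv_mem hh1, ?_⟩
    rw [hE]
    group

/-- all "blocks" (intersection of a right coset with an inverse of a right coset, inside
the double coset) have the same size -/
lemma block_ncard [Fintype G]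
    (heq : (H : Set G) * {x} * (H : Set G) = (H : Set G) * {x⁻¹} * (H : Set G))
    {g g' : G} (hg : g ∈ (H : Set G) * {x} * (H : Set G))
    (hg' : g' ∈ (H : Set G) * {x} * (H : Set G)) :
    (rcos H g ∩ (rcos H g')⁻¹).ncard
      = ((H : Set G) ∩ ((fun u => x⁻¹ * u * x) '' (H : Set G))).ncard := by
  obtain ⟨h1, hh1, h2, hh2, hgE⟩ := memD_iff.mp hg
  obtain ⟨h3, hh3, h4, hh4, hg'E⟩ := memD_iff.mp hg'
  obtain ⟨a, ha, bb, hb, habE⟩ := memD_iff.mp (xinv_mem_D heq)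
  set z := g'⁻¹ * h3 * bb⁻¹ * h2 with hz
  have key : x⁻¹ * bb⁻¹ = a * x := by rw [habE]; group
  have hz1 : z * g⁻¹ ∈ H := by
    have e1 : z * g⁻¹ = h4⁻¹ * ((x⁻¹ * bb⁻¹) * x⁻¹) * h1⁻¹ := by
      rw [hz, hgE, hg'E]; group
    rw [key] at e1
    have e2 : h4⁻¹ * (a * x * x⁻¹) * h1⁻¹ = h4⁻¹ * a * h1⁻¹ := by group
    rw [e1, e2]
    exact H.mul_mem (H.mul_mem (H.inv_mem hh4) ha) (H.inv_mem hh1)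
  have hz2 : z⁻¹ * g'⁻¹ ∈ H := by
    have e : z⁻¹ * g'⁻¹ = h2⁻¹ * bb * h3⁻¹ := by rw [hz, hg'E]; group
    rw [e]
    exact H.mul_mem (H.mul_mem (H.inv_mem hh2) hb) (H.inv_mem hh3)
  have hzD : z ∈ (H : Set G) * {x} * (H : Set G) := by
    refine memD_iff.mpr ⟨z * g⁻¹ * h1, H.mul_mem hz1 hh1, h2, hh2, ?_⟩
    rw [hgE]; group
  obtain ⟨p, hp, q, hq, hzE⟩ := memD_iff.mp hzD
  have hset : rcos H g ∩ (rcos H g')⁻¹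
      = (fun u => z * q⁻¹ * u * q) '' ((H : Set G) ∩ ((fun u => x⁻¹ * u * x) '' (H : Set G))) := by
    ext w
    simp only [Set.mem_inter_iff, Set.mem_inv, mem_rcos_iff, Set.mem_image, SetLike.mem_coe]
    constructor
    · rintro ⟨hw1, hw2⟩
      have hwz1 : w * z⁻¹ ∈ H := by
        have e : w * z⁻¹ = (w * g⁻¹) * (z * g⁻¹)⁻¹ := by group
        rw [e]; exact H.mul_mem hw1 (H.inv_mem hz1)
      have hwz2 : z⁻¹ * w ∈ H := by
        have e : z⁻¹ * w = (z⁻¹ * g'⁻¹) * (w⁻¹ * g'⁻¹)⁻¹ := by group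
        rw [e]; exact H.mul_mem hz2 (H.inv_mem hw2)
      refine ⟨q * (z⁻¹ * w) * q⁻¹, ⟨?_, ⟨p⁻¹ * (w * z⁻¹) * p, ?_, ?_⟩⟩, ?_⟩
      · exact H.mul_mem (H.mul_mem hq hwz2) (H.inv_mem hq)
      · exact H.mul_mem (H.mul_mem (H.inv_mem hp) hwz1) hp
      · rw [hzE]; group
      · rw [hzE]; group
    · rintro ⟨u, ⟨huH, v, hvH, hvu⟩, rfl⟩
      constructor
      · have e : z * q⁻¹ * u * q * g⁻¹ = p * (x * u * x⁻¹) * p⁻¹ * (z * g⁻¹) := by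
          rw [hzE]; group
        rw [e, ← hvu]
        have e2 : p * (x * (x⁻¹ * v * x) * x⁻¹) * p⁻¹ * (z * g⁻¹)
            = p * v * p⁻¹ * (z * g⁻¹) := by group
        rw [e2]
        exact H.mul_mem (H.mul_mem (H.mul_mem hp hvH) (H.inv_mem hp)) hz1
      · have e : (z * q⁻¹ * u * q)⁻¹ * g'⁻¹ = q⁻¹ * u⁻¹ * q * (z⁻¹ * g'⁻¹) := by group
        rw [e]
        exact H.mul_mem (H.mul_mem (H.mul_mem (H.inv_mem hq) (H.inv_mem huH)) hq) hz2
  rw [hset, Set.ncard_image_of_injective]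
  intro u v huv
  simp only at huv
  have h2 := mul_right_cancel huv
  have h3 := mul_left_cancel h2
  exact h3

lemma block_inv {g g' : G} :
    (rcos (H := H) g ∩ (rcos H g')⁻¹)⁻¹ = rcos H g' ∩ (rcos H g)⁻¹ := by
  rw [Set.inter_inv, inv_inv, Set.inter_comm]

end Cosets


section Dist

/-- the greedy distribution sum -/
lemma sum_min (c : ℕ) : ∀ (k b : ℕ), b ≤ k * c →
    ∑ t ∈ Finset.range k, min c (b - t * c) = b := by
  intro k
  induction k with
  | zero =>
    intro b hb
    simp only [Finset.range_zero, Finset.sum_empty]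
    omega
  | succ k ih =>
    intro b hb
    rw [Finset.sum_range_succ']
    have hkc : (k + 1) * c = k * c + c := by ring
    have hstep : ∀ t : ℕ, b - (t + 1) * c = (b - c) - t * c := by
      intro t
      have : (t + 1) * c = t * c + c := by ring
      omega
    simp only [hstep]
    rw [ih (b - c) (by omega)]
    simp only [Nat.zero_mul, Nat.sub_zero]
    rcases Nat.le_total c b with h | h
    · rw [min_eq_left h]; omega
    · rw [min_eq_right h]; omega

/-- existence of the size-distribution function -/
lemma exists_f (κ k b : ℕ) (hκ : 1 ≤ κ) (hb : b ≤ k * κ) :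
    ∃ f : ℕ → ℕ, (∀ t, f t ≤ κ) ∧ (∑ t ∈ Finset.range k, f t = b) ∧
      (Even κ → ∀ t, t ≠ 0 → Even (f t)) := by
  rcases Nat.even_or_odd κ with hev | hodd
  · -- κ even
    obtain ⟨μ, hμ⟩ := hev   -- κ = μ + μ
    obtain ⟨g0, hg0κ, hg0b, hrev, hg0big, hg0sm⟩ :
        ∃ g0, g0 ≤ κ ∧ g0 ≤ b ∧ Even (b - g0) ∧ (κ ≤ b → κ - 1 ≤ g0) ∧ (b ≤ κ → g0 = b) := by
      rcases Nat.le_total b κ with h | h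
      · exact ⟨b, h, le_rfl, ⟨0, by omega⟩, fun h2 => by omega, fun _ => rfl⟩
      · exact ⟨κ - (b - κ) % 2, by omega, by omega,
          ⟨(b - κ) / 2 + (b - κ) % 2, by omega⟩, fun _ => by omega, fun h2 => by omega⟩
    obtain ⟨r, hr⟩ : ∃ r, r = b - g0 := ⟨_, rfl⟩
    rw [← hr] at hrev
    refine ⟨fun t => match t with | 0 => g0 | (t' + 1) => 2 * min μ (r / 2 - t' * μ), ?_, ?_, ?_⟩
    · intro t
      match t with
      | 0 => exact hg0κ
      | (t' + 1) =>
        have := Nat.min_le_left μ (r / 2 - t' * μ)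
        simp only []
        omega
    · rcases Nat.eq_zero_or_pos k with rfl | hkpos
      · simp only [Finset.range_zero, Finset.sum_empty]
        omega
      obtain ⟨k', rfl⟩ : ∃ k', k = k' + 1 := ⟨k - 1, by omega⟩
      rw [Finset.sum_range_succ']
      simp only []
      rw [← Finset.mul_sum]
      have hr2 : r / 2 ≤ k' * μ := by
        have h1 : (k' + 1) * κ = k' * κ + κ := by ring
        have h2 : k' * κ = 2 * (k' * μ) := by rw [hμ]; ring
        obtain ⟨c, hc⟩ := hrev
        rcases Nat.le_total b κ with h | h
        · have := hg0sm h
          omega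
        · have := hg0big h
          omega
      rw [sum_min μ k' (r / 2) hr2]
      obtain ⟨c, hc⟩ := hrev
      omega
    · intro _ t ht
      match t with
      | (t' + 1) => exact even_two_mul _
  · -- κ odd
    refine ⟨fun t => min κ (b - t * κ), fun t => Nat.min_le_left _ _, sum_min κ k b hb, ?_⟩
    intro hevκ
    exact absurd hevκ (Nat.not_even_iff_odd.mpr hodd)

lemma zmod_sum (k : ℕ) [NeZero k] (f : ℕ → ℕ) :
    ∑ z : ZMod k, f (ZMod.val z) = ∑ t ∈ Finset.range k, f t := by
  rw [← Fin.sum_univ_eq_sum_range]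
  exact Fintype.sum_equiv
    (⟨fun z => ⟨z.val, ZMod.val_lt z⟩, fun j => ((j : ℕ) : ZMod k),
      fun z => ZMod.natCast_rightInverse z,
      fun j => Fin.ext (ZMod.val_cast_of_lt j.isLt)⟩ : ZMod k ≃ Fin k) _ _ (fun z => rfl)

lemma zmod_double_zero (k : ℕ) [NeZero k] (hk : Odd k) (a : ZMod k) (h : a + a = 0) :
    a = 0 := by
  have hv := ZMod.val_add a a
  rw [h, ZMod.val_zero] at hv
  have hlt : a.val < k := ZMod.val_lt a
  have hdvd : k ∣ a.val + a.val := Nat.dvd_of_mod_eq_zero hv.symm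
  obtain ⟨c, hc⟩ := hdvd
  obtain ⟨m, hm⟩ := hk
  have : a.val = 0 := by
    rcases Nat.lt_or_ge c 2 with h2 | h2
    · interval_cases c <;> omega
    · nlinarith
  exact (ZMod.val_eq_zero a).mp this

lemma zmod_val_injective (k : ℕ) [NeZero k] :
    Function.Injective (ZMod.val : ZMod k → ℕ) :=
  Function.LeftInverse.injective (g := (Nat.cast : ℕ → ZMod k)) ZMod.natCast_rightInverse

end Dist

section Split

variable {G : Type*} [Group G]

/-- splitting an inverse-closed `b`-fold transversal set into `b` disjoint transversals -/
lemma split_layers [Fintype G] (H : Subgroup G) (D S : Set G) (b : ℕ)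
    (hSD : S ⊆ D) (hSinv : S⁻¹ = S)
    (hcount : ∀ g ∈ D, (S ∩ rcos H g).ncard = b) :
    ∃ T : Fin b → Set G,
      (∀ i, IsRightTransversalOn H (T i) D) ∧
      (Pairwise fun i j => Disjoint (T i) (T j)) ∧
      (⋃ i, T i)⁻¹ = ⋃ i, T i := by
  classical
  letI : LinearOrder G :=
    LinearOrder.lift' (fun g => (Fintype.equivFin G) g) (Fintype.equivFin G).injective
  set ν : G → ℕ := fun s => ((S ∩ rcos H s) ∩ {y | y < s}).ncard with hν
  have hkey : ∀ g ∈ D, ∀ s, s ∈ S → s ∈ rcos H g →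
      ν s = ((S ∩ rcos H g) ∩ {y | y < s}).ncard := by
    intro g hg s _ hsr
    rw [hν]
    simp only
    rw [rcos_eq_of_mem hsr]
  have hlayer : ∀ s ∈ S, ν s < b := by
    intro s hs
    have hsD := hSD hs
    have hA := hcount s hsD
    have hrank : ν s < (S ∩ rcos H s).ncard := by
      apply Set.ncard_lt_ncard ?_ (Set.toFinite _)
      exact ⟨Set.inter_subset_left, fun hsub =>
        lt_irrefl s (hsub ⟨hs, mem_rcos_self H s⟩).2⟩
    rwa [hA] at hrank
  refine ⟨fun i => {s | s ∈ S ∧ ν s = (i : ℕ)}, ?_, ?_, ?_⟩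
  · intro i
    constructor
    · exact fun s hs => hSD hs.1
    · intro g hg
      have hA := hcount g hg
      have hib : (i : ℕ) < (S ∩ rcos H g).ncard := by rw [hA]; exact i.isLt
      obtain ⟨a, ⟨haA, hark⟩, huniq⟩ :=
        rank_existsUnique (S ∩ rcos H g) (Set.toFinite _) hib
      refine ⟨a, ⟨⟨haA.1, ?_⟩, haA.2⟩, ?_⟩
      · rw [hkey g hg a haA.1 haA.2, hark]
      · rintro t ⟨⟨htS, htν⟩, htg⟩
        exact huniq t ⟨⟨htS, htg⟩, by rw [← hkey g hg t htS htg, htν]⟩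
  · intro i j hij
    rw [Set.disjoint_left]
    rintro s ⟨_, hsi⟩ ⟨_, hsj⟩
    exact hij (Fin.ext (by rw [← hsi, ← hsj]))
  · have hU : ⋃ i : Fin b, {s | s ∈ S ∧ ν s = (i : ℕ)} = S := by
      ext s
      simp only [Set.mem_iUnion, Set.mem_setOf_eq]
      constructor
      · rintro ⟨i, h, _⟩; exact h
      · intro hs
        exact ⟨⟨ν s, hlayer s hs⟩, hs, rfl⟩
    rw [hU, hSinv]

end Split

section BuildS

variable {G : Type*} [Group G]

lemma ncard_inv_set (A : Set G) : (A⁻¹).ncard = A.ncard := by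
  rw [← Set.image_inv_eq_inv, Set.ncard_image_of_injective _ inv_injective]

/-- the core construction: an inverse-closed set meeting each right coset inside the
double coset `HxH` in exactly `b` points -/
lemma build_S [Fintype G] (H : Subgroup G) (x : G) (hpc : IsPerfectCode H)
    (heq : (H : Set G) * {x} * (H : Set G) = (H : Set G) * {x⁻¹} * (H : Set G))
    (hodd : Odd (Nat.card H /
      ((H : Set G) ∩ ((fun g => x⁻¹ * g * x) '' (H : Set G))).ncard))
    (b : ℕ) (hb : b ≤ Nat.card H) :
    ∃ S : Set G, S ⊆ (H : Set G) * {x} * (H : Set G) ∧ S⁻¹ = S ∧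
      ∀ g ∈ (H : Set G) * {x} * (H : Set G), (S ∩ rcos H g).ncard = b := by
  classical
  set D := (H : Set G) * {x} * (H : Set G) with hD
  set κ := ((H : Set G) ∩ ((fun g => x⁻¹ * g * x) '' (H : Set G))).ncard with hκ
  obtain ⟨T, hT, hTinv⟩ := hpc
  set T₀ := T ∩ D with hT₀def
  have hDinv : D⁻¹ = D := D_inv heq
  -- T₀ is a transversal of the cosets in D
  have htr : ∀ g ∈ D, ∃! t, t ∈ T₀ ∧ t ∈ rcos H g := by
    intro g hg
    obtain ⟨t, ⟨htT, htH⟩, huniq⟩ := hT g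
    have htD : t ∈ D := rcos_subset_D hg htH
    exact ⟨t, ⟨⟨htT, htD⟩, htH⟩, fun t' ⟨⟨ht'T, _⟩, ht'r⟩ => huniq t' ⟨ht'T, ht'r⟩⟩
  have hT₀inv : T₀⁻¹ = T₀ := by rw [hT₀def, Set.inter_inv, hTinv, hDinv]
  have hrinj : ∀ t ∈ T₀, ∀ t' ∈ T₀, (rcos H t ∩ rcos H t').Nonempty → t = t' := by
    intro t ht t' ht' hne
    have he := rcos_eq_of_nonempty hne
    obtain ⟨u, hu, huniq⟩ := htr t ht.2
    have e1 := huniq t ⟨ht, mem_rcos_self H t⟩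
    have e2 := huniq t' ⟨ht', by rw [he]; exact mem_rcos_self H t'⟩
    rw [e1, e2]
  -- finiteness and cardinalities
  haveI : Fintype ↥T₀ := Fintype.ofFinite _
  set k := Fintype.card ↥T₀ with hk
  have hκpos : 1 ≤ κ := by
    rw [hκ]
    rw [Nat.one_le_iff_ne_zero, Ne, Set.ncard_eq_zero (Set.toFinite _),
      ← Ne, ← Set.nonempty_iff_ne_empty]
    exact ⟨1, one_mem H, ⟨1, one_mem H, by group⟩⟩
  have hcover : ∀ g ∈ D, rcos H g = ⋃ j : ↥T₀, (rcos H g ∩ (rcos H (j : G))⁻¹) := by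
    intro g hg
    ext d
    constructor
    · intro hd
      have hdD : d ∈ D := rcos_subset_D hg hd
      have hdinvD : d⁻¹ ∈ D := by
        rw [← hDinv]
        exact Set.inv_mem_inv.mpr hdD
      obtain ⟨t, ⟨htT₀, htrc⟩, _⟩ := htr d⁻¹ hdinvD
      refine Set.mem_iUnion.mpr ⟨⟨t, htT₀⟩, hd, ?_⟩
      rw [Set.mem_inv, rcos_eq_of_mem htrc]
      exact mem_rcos_self H d⁻¹
    · intro hd
      obtain ⟨j, hj⟩ := Set.mem_iUnion.mp hd
      exact hj.1
  have hbdisj : ∀ (g : G) (j j' : ↥T₀), j ≠ j' →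
      Disjoint (rcos H g ∩ (rcos H (j : G))⁻¹) (rcos H g ∩ (rcos H (j' : G))⁻¹) := by
    intro g j j' hjj
    rw [Set.disjoint_left]
    rintro d ⟨_, hd1⟩ ⟨_, hd2⟩
    rw [Set.mem_inv] at hd1 hd2
    exact hjj (Subtype.ext (hrinj j.1 j.2 j'.1 j'.2 ⟨d⁻¹, hd1, hd2⟩))
  have hcard : Nat.card H = k * κ := by
    have h1 := ncard_rcos H x
    rw [← h1, hcover x x_mem_D, my_ncard_iUnion _ (hbdisj x)]
    rw [Finset.sum_congr rfl (fun j _ => block_ncard heq x_mem_D j.2.2)]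
    rw [Finset.sum_const, Finset.card_univ, smul_eq_mul]
  have hkodd : Odd k := by
    have hkk : Nat.card H / κ = k := by
      rw [hcard, Nat.mul_div_cancel _ hκpos]
    rwa [hkk] at hodd
  have hk0 : k ≠ 0 := by rcases hkodd with ⟨m, hm⟩; omega
  haveI : NeZero k := ⟨hk0⟩
  -- the involution in T₀
  have hT₀card : T₀.ncard = k := by
    rw [← Nat.card_coe_set_eq, Nat.card_eq_fintype_card]
  obtain ⟨y, hyT₀, hyfix⟩ := odd_fix T₀ hT₀inv (hT₀card ▸ hkodd)
  -- the labelling equivalence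
  have hcards : Fintype.card ↥T₀ = Fintype.card (ZMod k) := by rw [ZMod.card]
  set e0 := Fintype.equivOfCardEq hcards with he0
  set e : ↥T₀ ≃ ZMod k := e0.trans (Equiv.addLeft (- e0 ⟨y, hyT₀⟩)) with he
  have hey : e ⟨y, hyT₀⟩ = 0 := by
    simp [he, Equiv.trans_apply, Equiv.coe_addLeft, neg_add_cancel]
  -- the distribution function
  obtain ⟨f, hf1, hf2, hf3⟩ := exists_f κ k b hκpos (by rw [← hcard]; exact hb)
  set c : ↥T₀ → ↥T₀ → ℕ := fun i j => f ((e i + e j).val) with hc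
  set Bl : ↥T₀ → ↥T₀ → Set G := fun i j => rcos H i.1 ∩ (rcos H j.1)⁻¹ with hBl
  have hBlcard : ∀ i j, (Bl i j).ncard = κ := fun i j => block_ncard heq i.2.2 j.2.2
  have hBlinv : ∀ i j, (Bl i j)⁻¹ = Bl j i := fun i j => block_inv
  have hcle : ∀ i j, c i j ≤ (Bl i j).ncard := fun i j => by
    rw [hBlcard]; exact hf1 _
  have hcsym : ∀ i j, c i j = c j i := fun i j => by rw [hc]; simp only; rw [add_comm]
  -- diagonal condition
  have hdiag : ∀ i, Even (c i i) ∨ ∃ a ∈ Bl i i, a⁻¹ = a := by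
    intro i
    rcases Nat.even_or_odd κ with hκe | hκo
    · by_cases hz : e i + e i = 0
      · have hz0 : e i = 0 := zmod_double_zero k hkodd _ hz
        have hiy : i = ⟨y, hyT₀⟩ := e.injective (by rw [hz0, hey])
        right
        refine ⟨y, ?_, hyfix⟩
        rw [hiy, hBl]
        refine ⟨mem_rcos_self H y, ?_⟩
        rw [Set.mem_inv, hyfix]
        exact mem_rcos_self H y
      · left
        apply hf3 hκe
        intro hval0
        exact hz ((ZMod.val_eq_zero _).mp hval0)
    · right
      exact odd_fix (Bl i i) (hBlinv i i) (by rw [hBlcard]; exact hκo)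
  -- choices of pieces
  choose Aoff hAsub hAcard using fun i j => Set.exists_subset_card_eq (hcle i j)
  choose Adg hDsub hDinv2 hDcard using fun i =>
    inv_select (c i i) (Bl i i) (hBlinv i i) (hcle i i) (hdiag i)
  set F : ↥T₀ → ↥T₀ → Set G := fun i j =>
    if i = j then Adg i else
      if (e i).val < (e j).val then Aoff i j else (Aoff j i)⁻¹ with hF
  have hvalne : ∀ i j : ↥T₀, i ≠ j → (e i).val ≠ (e j).val := by
    intro i j hij h
    exact hij (e.injective (zmod_val_injective k h))
  have hFsub : ∀ i j, F i j ⊆ Bl i j := by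
    intro i j
    rw [hF]
    simp only
    split_ifs with h1 h2
    · rw [← h1]; exact hDsub i
    · exact hAsub i j
    · rw [← hBlinv j i]
      exact Set.inv_subset_inv.mpr (hAsub j i)
  have hFinv : ∀ i j, (F i j)⁻¹ = F j i := by
    intro i j
    by_cases hij : i = j
    · subst hij
      rw [hF]; simp only [if_pos rfl]
      exact hDinv2 i
    · have hne := hvalne i j hij
      have hneji : j ≠ i := Ne.symm hij
      rcases lt_or_gt_of_ne hne with h | h
      · rw [hF]; simp only
        rw [if_neg hij, if_pos h, if_neg hneji, if_neg (not_lt.mpr (le_of_lt h))]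
      · rw [hF]; simp only
        rw [if_neg hij, if_neg (not_lt.mpr (le_of_lt h)), if_neg hneji, if_pos h, inv_inv]
  have hFcard : ∀ i j, (F i j).ncard = c i j := by
    intro i j
    rw [hF]; simp only
    split_ifs with h1 h2
    · rw [← h1]; exact hDcard i
    · exact hAcard i j
    · rw [ncard_inv_set, hAcard j i, hcsym]
  set S := ⋃ i, ⋃ j, F i j with hS
  refine ⟨S, ?_, ?_, ?_⟩
  · -- S ⊆ D
    rw [hS]
    refine Set.iUnion_subset fun i => Set.iUnion_subset fun j => ?_
    intro w hw
    exact rcos_subset_D i.2.2 ((hFsub i j hw).1)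
  · -- S⁻¹ = S
    ext w
    rw [Set.mem_inv, hS]
    simp only [Set.mem_iUnion]
    constructor
    · rintro ⟨i, j, h⟩
      refine ⟨j, i, ?_⟩
      rw [← hFinv i j]
      exact Set.mem_inv.mpr h
    · rintro ⟨i, j, h⟩
      refine ⟨j, i, ?_⟩
      rw [← hFinv j i] at h
      exact Set.mem_inv.mp h
  · -- counts
    intro g hg
    obtain ⟨t, ⟨htT₀, htrc⟩, _⟩ := htr g hg
    have hrg : rcos H g = rcos H t := (rcos_eq_of_mem htrc).symm
    set i0 : ↥T₀ := ⟨t, htT₀⟩ with hi0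
    have hSrow : S ∩ rcos H g = ⋃ j, F i0 j := by
      ext w
      constructor
      · rintro ⟨hwS, hwr⟩
        rw [hS] at hwS
        simp only [Set.mem_iUnion] at hwS
        obtain ⟨i, j, hw⟩ := hwS
        have hwi : w ∈ rcos H i.1 := (hFsub i j hw).1
        have hii0 : i = i0 := Subtype.ext
          (hrinj i.1 i.2 t htT₀ ⟨w, hwi, by rw [← hrg]; exact hwr⟩)
        rw [hii0] at hw
        exact Set.mem_iUnion.mpr ⟨j, hw⟩
      · intro hw
        obtain ⟨j, hw⟩ := Set.mem_iUnion.mp hw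
        refine ⟨?_, ?_⟩
        · rw [hS]
          simp only [Set.mem_iUnion]
          exact ⟨i0, j, hw⟩
        · rw [hrg]
          exact (hFsub i0 j hw).1
    have hrowdisj : ∀ j j' : ↥T₀, j ≠ j' → Disjoint (F i0 j) (F i0 j') := by
      intro j j' hjj
      exact Set.disjoint_of_subset (fun w hw => (hFsub i0 j hw).2)
        (fun w hw => (hFsub i0 j' hw).2)
        (by
          rw [Set.disjoint_left]
          rintro d hd1 hd2
          rw [Set.mem_inv] at hd1 hd2
          exact hjj (Subtype.ext (hrinj j.1 j.2 j'.1 j'.2 ⟨d⁻¹, hd1, hd2⟩)))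
    rw [hSrow, my_ncard_iUnion _ hrowdisj]
    rw [Finset.sum_congr rfl (fun j _ => hFcard i0 j)]
    have hsum1 : ∑ j : ↥T₀, c i0 j = ∑ z : ZMod k, f z.val := by
      refine Fintype.sum_equiv (e.trans (Equiv.addLeft (e i0))) _ _ (fun j => ?_)
      rfl
    rw [hsum1, zmod_sum, hf2]

end BuildS

theorem stmt8 {G : Type*} [Group G] [Fintype G] (H : Subgroup G) (x : G)
    (hpc : IsPerfectCode H)
    (hx : x ∉ H)
    (heq : (H : Set G) * {x} * (H : Set G) = (H : Set G) * {x⁻¹} * (H : Set G))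
    (hodd : Odd (Nat.card H /
      ((H : Set G) ∩ ((fun g => x⁻¹ * g * x) '' (H : Set G))).ncard)) :
    ∀ b : ℕ, b ≤ Nat.card H →
      ∃ T : Fin b → Set G,
        (∀ i, IsRightTransversalOn H (T i) ((H : Set G) * {x} * (H : Set G))) ∧
        (Pairwise fun i j => Disjoint (T i) (T j)) ∧
        (⋃ i, T i)⁻¹ = ⋃ i, T i := by
  intro b hb
  obtain ⟨S, hSD, hSinv, hcount⟩ := build_S H x hpc heq hodd b hb
  exact split_layers H _ S b hSD hSinv hcount
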